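/- Let X be a finite-dimensional normed vector space and K a finitely generated closed convex cone. If A ⊂ X is a nonempty set such that x*(A) is bounded from below for every x* ∈ K⁺, then there exists ℓ ≥ 0 with A ⊂ ℓ·D_X + K (i.e., dual K-boundedness implies K-boundedness). -/

import Mathlib

open Pointwise Set Filter Topology

lemma extremePoints_polyhedron_finite {Y : Type*} [NormedAddCommGroup Y] [NormedSpace ℝ Y]
    {ι : Type*} [Finite ι] (L : ι → Y →L[ℝ] ℝ) (b : ι → ℝ) :
    (({y : Y | ∀ i, b i ≤ L i y}).extremePoints ℝ).Finite := by
  set P : Set Y := {y : Y | ∀ i, b i ≤ L i y} with hP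
  have hinj : Set.InjOn (fun y => {i | L i y = b i}) (P.extremePoints ℝ) := by
    intro x hx y hy hxy
    by_contra hne
    have hxP : x ∈ P := extremePoints_subset hx
    have hev : ∀ i : ι, ∀ᶠ t in 𝓝[>] (0:ℝ),
        b i ≤ L i (x + t • (x - y)) ∧ b i ≤ L i (x - t • (x - y)) := by
      intro i
      by_cases hi : L i x = b i
      · have hiy : L i y = b i := by
          have h2 : {j | L j x = b j} = {j | L j y = b j} := hxy
          exact (Set.ext_iff.mp h2 i).mp hi
        refine Filter.Eventually.of_forall fun t => ?_
        have h0 : L i (x - y) = 0 := by rw [map_sub, hiy, hi, sub_self]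
        constructor <;> simp [map_add, map_sub, map_smul, h0, smul_eq_mul, hi.ge]
      · have hlt : b i < L i x := lt_of_le_of_ne (hxP i) (Ne.symm hi)
        have hc : Continuous fun t : ℝ => L i (x + t • (x - y)) := by
          simp only [map_add, map_smul, smul_eq_mul]
          continuity
        have hc' : Continuous fun t : ℝ => L i (x - t • (x - y)) := by
          simp only [map_sub, map_smul, smul_eq_mul]
          continuity
        have h1 : ∀ᶠ t in 𝓝 (0:ℝ), b i < L i (x + t • (x - y)) :=
          (hc.continuousAt (x := (0:ℝ))).eventually_const_lt (by simpa using hlt)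
        have h2 : ∀ᶠ t in 𝓝 (0:ℝ), b i < L i (x - t • (x - y)) :=
          (hc'.continuousAt (x := (0:ℝ))).eventually_const_lt (by simpa using hlt)
        exact ((h1.and h2).filter_mono nhdsWithin_le_nhds).mono
          (fun t ht => ⟨ht.1.le, ht.2.le⟩)
    have hall : ∀ᶠ t in 𝓝[>] (0:ℝ),
        ∀ i, b i ≤ L i (x + t • (x - y)) ∧ b i ≤ L i (x - t • (x - y)) :=
      eventually_all.mpr hev
    obtain ⟨t, ht, htpos⟩ := (hall.and (eventually_mem_nhdsWithin)).exists
    have htpos' : (0:ℝ) < t := htpos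
    have h1 : x + t • (x - y) ∈ P := fun i => (ht i).1
    have h2 : x - t • (x - y) ∈ P := fun i => (ht i).2
    have hseg : x ∈ openSegment ℝ (x + t • (x - y)) (x - t • (x - y)) := by
      refine ⟨1/2, 1/2, by norm_num, by norm_num, by norm_num, ?_⟩
      module
    have heq : x + t • (x - y) = x := hx.2 h1 h2 hseg
    have hz : t • (x - y) = 0 := by linear_combination (norm := module) heq
    rcases smul_eq_zero.mp hz with h | h
    · exact absurd h (ne_of_gt htpos')
    · exact hne (sub_eq_zero.mp h)
  exact Set.Finite.of_finite_image (Set.toFinite _) hinj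

/-- In finite dimension, for a finitely generated closed convex cone `K`,
dual K-boundedness implies K-boundedness. -/
theorem dually_bounded_implies_bounded_fin_dim
    {X : Type*} [NormedAddCommGroup X] [NormedSpace ℝ X] [FiniteDimensional ℝ X]
    (K : Set X) (hKcl : IsClosed K) (hKconv : Convex ℝ K)
    (hK0 : (0 : X) ∈ K)
    (hKcone : ∀ t : ℝ, 0 ≤ t → ∀ y ∈ K, t • y ∈ K)
    (hgen : ∃ (n : ℕ) (v : Fin n → X),
      K = {x : X | ∃ c : Fin n → ℝ, (∀ i, 0 ≤ c i) ∧ x = ∑ i, c i • v i})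
    (A : Set X) (hA : A.Nonempty)
    (hdb : ∀ f : X →L[ℝ] ℝ, (∀ k ∈ K, 0 ≤ f k) → BddBelow (f '' A)) :
    ∃ ℓ : ℝ, 0 ≤ ℓ ∧ A ⊆ Metric.closedBall (0 : X) ℓ + K := by
  classical
  obtain ⟨n, v, hKeq⟩ := hgen
  -- generators belong to K
  have hvK : ∀ i, v i ∈ K := by
    intro i
    rw [hKeq]
    refine ⟨Pi.single i 1, fun j => ?_, ?_⟩
    · by_cases h : j = i <;> simp [Pi.single_apply, h]
    · simp [Pi.single_apply, ite_smul]
  -- a functional nonneg on generators is nonneg on K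
  have hKpos : ∀ g : X →L[ℝ] ℝ, (∀ i, 0 ≤ g (v i)) → ∀ k ∈ K, 0 ≤ g k := by
    intro g hg k hk
    rw [hKeq] at hk
    obtain ⟨c, hc, rfl⟩ := hk
    rw [map_sum]
    refine Finset.sum_nonneg fun i _ => ?_
    rw [map_smul, smul_eq_mul]
    exact mul_nonneg (hc i) (hg i)
  -- basis data
  set e : Module.Basis (Fin (Module.finrank ℝ X)) ℝ X := Module.finBasis ℝ X with he
  set M : ℝ := 1 + ∑ k, ‖e k‖ with hM
  have hM0 : 0 ≤ M := by
    have : (0:ℝ) ≤ ∑ k, ‖e k‖ := Finset.sum_nonneg fun k _ => norm_nonneg _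
    simp only [hM]; linarith
  have hMk : ∀ k, ‖e k‖ ≤ M := by
    intro k
    have h1 : ‖e k‖ ≤ ∑ j, ‖e j‖ :=
      Finset.single_le_sum (fun j _ => norm_nonneg (e j)) (Finset.mem_univ k)
    simp only [hM]; linarith
  -- the polyhedron of normalized nonnegative functionals
  set L : (Fin n ⊕ (Fin (Module.finrank ℝ X) × Bool)) → (X →L[ℝ] ℝ) →L[ℝ] ℝ :=
    fun i => Sum.casesOn i (fun j => ContinuousLinearMap.apply ℝ ℝ (v j))
      (fun p => if p.2 then ContinuousLinearMap.apply ℝ ℝ (e p.1)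
        else -(ContinuousLinearMap.apply ℝ ℝ (e p.1))) with hL
  set b : (Fin n ⊕ (Fin (Module.finrank ℝ X) × Bool)) → ℝ :=
    fun i => Sum.casesOn i (fun _ => (0:ℝ)) (fun _ => -M) with hb
  set S : Set (X →L[ℝ] ℝ) := {g | ∀ i, b i ≤ L i g} with hS
  have hSiInter : S = ⋂ i, {g : X →L[ℝ] ℝ | b i ≤ L i g} := by
    ext g; simp [hS, Set.mem_iInter]
  have hSclosed : IsClosed S := by
    rw [hSiInter]
    exact isClosed_iInter fun i => isClosed_le continuous_const (L i).continuous
  have hSconv : Convex ℝ S := by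
    rw [hSiInter]
    exact convex_iInter fun i =>
      convex_halfSpace_ge ⟨(L i).map_add, (L i).map_smul⟩ (b i)
  -- membership facts
  have hSv : ∀ g ∈ S, ∀ j, 0 ≤ g (v j) := by
    intro g hg j
    have := hg (Sum.inl j)
    simpa [hL, hb] using this
  have hSe : ∀ g ∈ S, ∀ k, |g (e k)| ≤ M := by
    intro g hg k
    have h1 := hg (Sum.inr (k, true))
    have h2 := hg (Sum.inr (k, false))
    simp only [hL, hb] at h1 h2
    rw [abs_le]
    constructor
    · simpa using h1
    · have : -M ≤ -(g (e k)) := by simpa using h2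
      linarith
  -- compactness of S
  obtain ⟨C, hC0, hCb⟩ := e.exists_opNorm_le (F := ℝ)
  have hSsub : S ⊆ Metric.closedBall 0 (C * M) := by
    intro g hg
    rw [Metric.mem_closedBall, dist_zero_right]
    exact hCb hM0 fun k => by rw [Real.norm_eq_abs]; exact hSe g hg k
  have hScomp : IsCompact S :=
    Metric.isCompact_of_isClosed_isBounded hSclosed
      (Metric.isBounded_closedBall.subset hSsub)
  -- Krein-Milman + finiteness of extreme points
  have hEfin : ((S.extremePoints ℝ)).Finite := by
    rw [hS]
    exact extremePoints_polyhedron_finite L b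
  have hKM : convexHull ℝ (S.extremePoints ℝ) = S := by
    have h1 := closure_convexHull_extremePoints hScomp hSconv
    rw [(hEfin.isClosed_convexHull (𝕜 := ℝ)).closure_eq] at h1
    exact h1
  have h0S : (0 : X →L[ℝ] ℝ) ∈ S := by
    intro i
    rcases i with j | ⟨k, bo⟩
    · simp [hL, hb]
    · cases bo <;> simp [hL, hb, hM0] <;> linarith
  have hEne : (S.extremePoints ℝ).Nonempty := by
    by_contra h
    rw [Set.not_nonempty_iff_eq_empty] at h
    rw [h, convexHull_empty] at hKM
    exact Set.notMem_empty 0 (hKM ▸ h0S)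
  set Efin : Finset (X →L[ℝ] ℝ) := hEfin.toFinset with hEfinDef
  have hEfinne : Efin.Nonempty := by
    rw [hEfinDef, Set.Finite.toFinset_nonempty]
    exact hEne
  set β : ℝ := Efin.inf' hEfinne (fun g => sInf (g '' A)) with hβdef
  have hβ : ∀ g ∈ S.extremePoints ℝ, ∀ a ∈ A, β ≤ g a := by
    intro g hg a ha
    have hgS : g ∈ S := extremePoints_subset hg
    have hbdd : BddBelow (g '' A) := hdb g (hKpos g (hSv g hgS))
    calc β ≤ sInf (g '' A) := Finset.inf'_le _ (hEfin.mem_toFinset.mpr hg)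
      _ ≤ g a := csInf_le hbdd ⟨a, ha, rfl⟩
  have hS_lb : ∀ g ∈ S, ∀ a ∈ A, β ≤ g a := by
    intro g hgS a ha
    have hsub : S.extremePoints ℝ ⊆ {h : X →L[ℝ] ℝ | β ≤ h a} :=
      fun h hh => hβ h hh a ha
    have hconv : Convex ℝ {h : X →L[ℝ] ℝ | β ≤ h a} :=
      convex_halfSpace_ge ⟨fun _ _ => rfl, fun _ _ => rfl⟩ β
    have := convexHull_min hsub hconv
    rw [hKM] at this
    exact this hgS
  -- the bound
  set ℓ : ℝ := max 0 (-β) + 1 with hℓdef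
  have hℓ0 : (0:ℝ) ≤ ℓ := by positivity
  have hℓ1 : (0:ℝ) < ℓ := by positivity
  have hℓβ : -β < ℓ := lt_of_le_of_lt (le_max_right 0 (-β)) (lt_add_one _)
  refine ⟨ℓ, hℓ0, fun a ha => ?_⟩
  by_contra hnot
  set Cs : Set X := Metric.closedBall 0 ℓ + K with hCs
  have hCconv : Convex ℝ Cs := (convex_closedBall _ _).add hKconv
  have hCcl : IsClosed Cs := hKcl.add_left_of_isCompact (isCompact_closedBall 0 ℓ)
  have hKC : K ⊆ Cs := by
    intro k hk
    have h0b : (0:X) ∈ Metric.closedBall (0:X) ℓ := Metric.mem_closedBall_self hℓ0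
    have := Set.add_mem_add h0b hk
    rwa [zero_add] at this
  have hBC : Metric.closedBall (0:X) ℓ ⊆ Cs := by
    intro z hz
    have := Set.add_mem_add hz hK0
    rwa [add_zero] at this
  obtain ⟨f, u, hfu, hua⟩ := geometric_hahn_banach_closed_point hCconv hCcl hnot
  have hu0 : 0 < u := by
    have := hfu 0 (hKC hK0)
    simpa using this
  have hfK : ∀ k ∈ K, f k ≤ 0 := by
    intro k hk
    by_contra h
    push_neg at h
    have ht : (0:ℝ) ≤ (u + 1) / f k := div_nonneg (by linarith) h.le
    have h2 := hfu _ (hKC (hKcone _ ht k hk))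
    rw [map_smul, smul_eq_mul, div_mul_cancel₀ _ (ne_of_gt h)] at h2
    linarith
  have hfnorm : ‖f‖ ≤ u / ℓ := by
    refine ContinuousLinearMap.opNorm_le_bound f (div_nonneg hu0.le hℓ0) fun x => ?_
    rcases eq_or_ne x 0 with rfl | hx
    · simp
    · have hxn : (0:ℝ) < ‖x‖ := norm_pos_iff.mpr hx
      have hzmem : (ℓ / ‖x‖) • x ∈ Metric.closedBall (0:X) ℓ := by
        rw [Metric.mem_closedBall, dist_zero_right, norm_smul, Real.norm_eq_abs,
          abs_of_nonneg (div_nonneg hℓ0 hxn.le), div_mul_cancel₀ _ (ne_of_gt hxn)]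
      have hzmem' : -((ℓ / ‖x‖) • x) ∈ Metric.closedBall (0:X) ℓ := by
        rwa [Metric.mem_closedBall, dist_zero_right, norm_neg, ← dist_zero_right,
          ← Metric.mem_closedBall]
      have h1 := hfu _ (hBC hzmem)
      have h2 := hfu _ (hBC hzmem')
      rw [map_smul, smul_eq_mul] at h1
      rw [map_neg, map_smul, smul_eq_mul] at h2
      have habs : (ℓ / ‖x‖) * |f x| ≤ u := by
        rcases abs_cases (f x) with ⟨heq, _⟩ | ⟨heq, _⟩ <;> rw [heq] <;> linarith
      have hml : ℓ * |f x| ≤ u * ‖x‖ := by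
        rw [div_mul_eq_mul_div, div_le_iff₀ hxn] at habs
        linarith
      rw [Real.norm_eq_abs, div_mul_eq_mul_div, le_div_iff₀ hℓ1]
      linarith [hml]
  have hfa : u < f a := hua
  have hfne : f ≠ 0 := by
    intro h
    rw [h] at hfa
    simp at hfa
    linarith
  have hfpos : (0:ℝ) < ‖f‖ := norm_pos_iff.mpr hfne
  obtain ⟨g, hgdef⟩ : ∃ g : X →L[ℝ] ℝ, g = ‖f‖⁻¹ • (-f) := ⟨_, rfl⟩
  have hgnorm : ‖g‖ = 1 := by
    rw [hgdef, norm_smul (α := ℝ) (β := X →L[ℝ] ℝ), norm_inv, norm_norm, norm_neg]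
    field_simp
  have hgS : g ∈ S := by
    intro i
    rcases i with j | ⟨k, bo⟩
    · show (0:ℝ) ≤ L (Sum.inl j) g
      have : f (v j) ≤ 0 := hfK _ (hvK j)
      have hval : L (Sum.inl j) g = ‖f‖⁻¹ * (-(f (v j))) := by
        rw [hgdef]
        simp [hL]
      rw [hval]
      have h0b : b (Sum.inl j) = 0 := rfl
      exact mul_nonneg (inv_nonneg.mpr (norm_nonneg f)) (by linarith)
    · have habs : |g (e k)| ≤ M := by
        calc |g (e k)| = ‖g (e k)‖ := (Real.norm_eq_abs _).symm
          _ ≤ ‖g‖ * ‖e k‖ := g.le_opNorm _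
          _ = ‖e k‖ := by rw [hgnorm, one_mul]
          _ ≤ M := hMk k
      rcases abs_le.mp habs with ⟨hlo, hhi⟩
      cases bo
      · show -M ≤ L (Sum.inr (k, false)) g
        have hval : L (Sum.inr (k, false)) g = -(g (e k)) := by simp [hL]
        rw [hval]; linarith
      · show -M ≤ L (Sum.inr (k, true)) g
        have hval : L (Sum.inr (k, true)) g = g (e k) := by simp [hL]
        rw [hval]; linarith
  have hβga : β ≤ g a := hS_lb g hgS a ha
  have hgaval : g a = ‖f‖⁻¹ * (-(f a)) := by
    rw [hgdef]
    simp
  have h1 : ℓ * ‖f‖ ≤ u := by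
    rw [le_div_iff₀ hℓ1] at hfnorm
    linarith
  have h2 : g a * ‖f‖ = -(f a) := by
    rw [hgaval, mul_comm (‖f‖⁻¹) _, mul_assoc, inv_mul_cancel₀ (ne_of_gt hfpos), mul_one]
  have h5 : g a * ‖f‖ < (-ℓ) * ‖f‖ := by
    rw [h2]
    linarith
  have h6 : g a < -ℓ := lt_of_mul_lt_mul_right (by linarith [h5]) (norm_nonneg f)
  linarith
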